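/- Let 0 < f_min < f̄ and f̄′ > 0 be reals, set b := 1/f̄, and let a ≥ 0 satisfy 2a < min( 1/f_min − 1/f̄ , f̄′·f̄^{−3} ). Then the distribution function F_{a,b} (with F_{0,b}(y) := y/b when a = 0) satisfies f_min ≤ F′_{a,b}(y) ≤ f̄ and |F″_{a,b}(y)| ≤ f̄′ for all y ∈ [0, a+b]. -/

import Mathlib

open scoped Classical

theorem stmt12 (fmin fbar fbar' : ℝ) (h0 : 0 < fmin) (h1 : fmin < fbar) (h2 : 0 < fbar')
    (a : ℝ) (ha : 0 ≤ a)
    (haub : 2 * a < min (1 / fmin - 1 / fbar) (fbar' / fbar ^ 3)) :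
    let b : ℝ := 1 / fbar
    let F : ℝ → ℝ := if a = 0 then (fun y => y / b)
      else fun y => (-b + Real.sqrt (b ^ 2 + 4 * a * y)) / (2 * a)
    ∀ y ∈ Set.Icc (0 : ℝ) (a + b),
      fmin ≤ deriv F y ∧ deriv F y ≤ fbar ∧ |deriv (deriv F) y| ≤ fbar' := by
  intro b F y hy
  have hfb : 0 < fbar := h0.trans h1
  have hb : 0 < b := by simp only [b]; positivity
  have hbb : b = 1 / fbar := rfl
  have hub1 : 2 * a < 1 / fmin - 1 / fbar := lt_of_lt_of_le haub (min_le_left _ _)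
  have hub2 : 2 * a < fbar' / fbar ^ 3 := lt_of_lt_of_le haub (min_le_right _ _)
  by_cases h : a = 0
  · have hF : F = fun y => y / b := if_pos h
    have hd : deriv F = fun _ : ℝ => 1 / b := by
      funext z
      rw [hF]
      simp [deriv_div_const]
    rw [hd]
    have h1b : (1 : ℝ) / b = fbar := by rw [hbb]; field_simp
    refine ⟨by rw [h1b]; exact h1.le, by rw [h1b], ?_⟩
    simp [h2.le]
  · have ha' : 0 < a := lt_of_le_of_ne ha (Ne.symm h)
    have hF : F = fun z => (-b + Real.sqrt (b ^ 2 + 4 * a * z)) / (2 * a) := if_neg h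
    set s : ℝ → ℝ := fun z => b ^ 2 + 4 * a * z with hs
    have hsder : ∀ z : ℝ, HasDerivAt s (4 * a) z := by
      intro z
      simpa only [id_eq, mul_one] using ((hasDerivAt_id z).const_mul (4 * a)).const_add (b ^ 2)
    have hsqrt : ∀ z : ℝ, 0 < s z →
        HasDerivAt (fun w => Real.sqrt (s w)) (1 / (2 * Real.sqrt (s z)) * (4 * a)) z := by
      intro z hz
      exact (Real.hasDerivAt_sqrt (ne_of_gt hz)).comp z (hsder z)
    have key : ∀ z : ℝ, 0 < s z → HasDerivAt F (Real.sqrt (s z))⁻¹ z := by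
      intro z hz
      have hsq : Real.sqrt (s z) ≠ 0 := by positivity
      have h3 := ((hsqrt z hz).const_add (-b)).div_const (2 * a)
      rw [hF]
      refine h3.congr_deriv ?_
      field_simp
      ring
    have hopen : IsOpen {z : ℝ | 0 < s z} :=
      isOpen_lt continuous_const (by continuity)
    have hsy : 0 < s y := by
      have : (0:ℝ) ≤ y := hy.1
      have : (0:ℝ) ≤ 4 * a * y := by positivity
      simp only [hs]; nlinarith [sq_nonneg b, hb]
    have hderivF : ∀ z : ℝ, 0 < s z → deriv F z = (Real.sqrt (s z))⁻¹ := fun z hz =>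
      (key z hz).deriv
    have hev : deriv F =ᶠ[nhds y] fun z => (Real.sqrt (s z))⁻¹ :=
      Filter.eventually_of_mem (hopen.mem_nhds hsy) fun z hz => hderivF z hz
    have hsqy : 0 < Real.sqrt (s y) := Real.sqrt_pos.mpr hsy
    have hinv : HasDerivAt (fun z => (Real.sqrt (s z))⁻¹)
        (-(1 / (2 * Real.sqrt (s y)) * (4 * a)) / (Real.sqrt (s y)) ^ 2) y :=
      (hsqrt y hsy).inv (ne_of_gt hsqy)
    have hd2 : deriv (deriv F) y
        = -(1 / (2 * Real.sqrt (s y)) * (4 * a)) / (Real.sqrt (s y)) ^ 2 := by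
      rw [hev.deriv_eq]
      exact hinv.deriv
    -- bounds on sqrt(s y)
    have hsy_lb : b ≤ Real.sqrt (s y) := by
      rw [show b = Real.sqrt (b ^ 2) by rw [Real.sqrt_sq hb.le]]
      apply Real.sqrt_le_sqrt
      show b ^ 2 ≤ b ^ 2 + 4 * a * y
      nlinarith [hy.1]
    have hsy_ub : Real.sqrt (s y) ≤ b + 2 * a := by
      rw [show b + 2 * a = Real.sqrt ((b + 2 * a) ^ 2) by rw [Real.sqrt_sq (by positivity)]]
      apply Real.sqrt_le_sqrt
      show b ^ 2 + 4 * a * y ≤ (b + 2 * a) ^ 2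
      nlinarith [hy.2]
    have hd1 : deriv F y = (Real.sqrt (s y))⁻¹ := hderivF y hsy
    have hfb1 : fbar * b = 1 := by rw [hbb]; field_simp
    refine ⟨?_, ?_, ?_⟩
    · rw [hd1]
      have hbm : b + 2 * a < 1 / fmin := by
        have : b = 1 / fbar := hbb
        linarith
      have hlt : Real.sqrt (s y) < 1 / fmin := lt_of_le_of_lt hsy_ub hbm
      rw [← one_div, le_div_iff₀ hsqy]
      calc fmin * Real.sqrt (s y) ≤ fmin * (1 / fmin) := by nlinarith
        _ = 1 := by field_simp
    · rw [hd1, ← one_div, div_le_iff₀ hsqy]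
      nlinarith [mul_le_mul_of_nonneg_left hsy_lb hfb.le]
    · rw [hd2]
      set r := Real.sqrt (s y) with hr
      have hval : (-(1 / (2 * r) * (4 * a)) / r ^ 2) = -(2 * a / r ^ 3) := by
        field_simp
        ring
      rw [hval, abs_neg, abs_of_nonneg (by positivity : (0:ℝ) ≤ 2 * a / r ^ 3)]
      have hb3 : b ^ 3 ≤ r ^ 3 := pow_le_pow_left₀ hb.le hsy_lb 3
      have h2ab : 2 * a < fbar' * b ^ 3 := by
        have hbeq : b ^ 3 = 1 / fbar ^ 3 := by rw [hbb]; field_simp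
        rw [hbeq]
        calc 2 * a < fbar' / fbar ^ 3 := hub2
          _ = fbar' * (1 / fbar ^ 3) := by ring
      rw [div_le_iff₀ (by positivity)]
      calc 2 * a ≤ fbar' * b ^ 3 := h2ab.le
        _ ≤ fbar' * r ^ 3 := by nlinarith
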